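/- Suppose there exist positive constants C₀, C₁ such that for all unit vectors v, all x ∈ ℝ^l, and all sufficiently large t, C₀ t ≤ n(x, x + t v) ≤ C₁ t, and that n satisfies the triangle inequality. Then the map v ↦ limsup_{t→∞} sup_{x ∈ ℝ^l} (t‖v‖ / n(x, x + t v)) is a continuous, positive, finite function on the unit sphere; moreover for unit vectors v, v′, any such directional-speed quantity d satisfies |d(v) − d(v′)| ≤ (C₁/C₀²)·‖v − v′‖ in the limit sense established via the inequality |t‖v‖/n(x,x+tv) − t‖v′‖/n(x,x+tv′)| ≤ (C₁/C₀²)‖v−v′‖ for large t. -/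

import Mathlib

/-- under linear upper and lower bounds `C₀ t ≤ n(x,x+tv) ≤ C₁ t` (for all
`x`, unit `v` and sufficiently large `t`) and the triangle inequality for `n`, the
directional speed `d(v) = limsup_{t→∞} sup_x t‖v‖/n(x,x+tv)` is a continuous, positive
(real-valued, hence finite) function on the unit sphere; moreover it is
`(C₁/C₀²)`-Lipschitz on unit vectors, via the pointwise inequality
`|t‖v‖/n(x,x+tv) − t‖v′‖/n(x,x+tv′)| ≤ (C₁/C₀²)‖v−v′‖` for large `t`. -/
theorem stmt_8 {l : ℕ}
    (n : EuclideanSpace ℝ (Fin l) → EuclideanSpace ℝ (Fin l) → ℕ)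
    (C₀ C₁ : ℝ) (hC₀ : 0 < C₀) (hC₁ : 0 < C₁)
    (htri : ∀ x y z, n x z ≤ n x y + n y z)
    (hbound : ∀ᶠ t in Filter.atTop, ∀ (x v : EuclideanSpace ℝ (Fin l)), ‖v‖ = 1 →
      C₀ * t ≤ (n x (x + t • v) : ℝ) ∧ (n x (x + t • v) : ℝ) ≤ C₁ * t) :
    let d : EuclideanSpace ℝ (Fin l) → ℝ := fun v =>
      Filter.limsup (fun t : ℝ => ⨆ x, t * ‖v‖ / (n x (x + t • v) : ℝ)) Filter.atTop
    ContinuousOn d (Metric.sphere (0 : EuclideanSpace ℝ (Fin l)) 1) ∧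
    (∀ v ∈ Metric.sphere (0 : EuclideanSpace ℝ (Fin l)) 1, 0 < d v) ∧
    (∀ v ∈ Metric.sphere (0 : EuclideanSpace ℝ (Fin l)) 1,
      ∀ v' ∈ Metric.sphere (0 : EuclideanSpace ℝ (Fin l)) 1,
        (∀ᶠ t in Filter.atTop, ∀ x,
          |t * ‖v‖ / (n x (x + t • v) : ℝ) - t * ‖v'‖ / (n x (x + t • v') : ℝ)| ≤
            (C₁ / C₀ ^ 2) * ‖v - v'‖) ∧
        |d v - d v'| ≤ (C₁ / C₀ ^ 2) * ‖v - v'‖) := by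
  intro d
  obtain ⟨T, hT⟩ := Filter.eventually_atTop.mp hbound
  have hKpos : 0 < C₁ / C₀ ^ 2 := by positivity
  -- basic bounds on n for large t
  have hn : ∀ (v : EuclideanSpace ℝ (Fin l)), ‖v‖ = 1 → ∀ t : ℝ, max T 1 ≤ t → ∀ x,
      0 < t ∧ 0 < (n x (x + t • v) : ℝ) ∧ C₀ * t ≤ (n x (x + t • v) : ℝ) ∧
        (n x (x + t • v) : ℝ) ≤ C₁ * t := by
    intro v hv t ht x
    have ht1 : (1:ℝ) ≤ t := le_trans (le_max_right _ _) ht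
    have htpos : (0:ℝ) < t := lt_of_lt_of_le one_pos ht1
    have h := hT t (le_trans (le_max_left _ _) ht) x v hv
    exact ⟨htpos, lt_of_lt_of_le (by positivity) h.1, h.1, h.2⟩
  -- each term is between 1/C₁ and 1/C₀
  have hterm : ∀ (v : EuclideanSpace ℝ (Fin l)), ‖v‖ = 1 → ∀ t : ℝ, max T 1 ≤ t → ∀ x,
      1 / C₁ ≤ t * ‖v‖ / (n x (x + t • v) : ℝ) ∧
      t * ‖v‖ / (n x (x + t • v) : ℝ) ≤ 1 / C₀ := by
    intro v hv t ht x
    obtain ⟨htpos, hapos, hlo, hhi⟩ := hn v hv t ht x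
    rw [hv, mul_one]
    constructor
    · rw [div_le_div_iff₀ hC₁ hapos]
      linarith
    · rw [div_le_div_iff₀ hapos hC₀]
      linarith
  have hbddA : ∀ (v : EuclideanSpace ℝ (Fin l)), ‖v‖ = 1 → ∀ t : ℝ, max T 1 ≤ t →
      BddAbove (Set.range fun x => t * ‖v‖ / (n x (x + t • v) : ℝ)) := by
    intro v hv t ht
    exact ⟨1 / C₀, by rintro y ⟨x, rfl⟩; exact (hterm v hv t ht x).2⟩
  -- bounds on the supremum
  have hsupb : ∀ (v : EuclideanSpace ℝ (Fin l)), ‖v‖ = 1 → ∀ t : ℝ, max T 1 ≤ t →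
      1 / C₁ ≤ (⨆ x, t * ‖v‖ / (n x (x + t • v) : ℝ)) ∧
      (⨆ x, t * ‖v‖ / (n x (x + t • v) : ℝ)) ≤ 1 / C₀ := by
    intro v hv t ht
    constructor
    · exact le_trans (hterm v hv t ht 0).1 (le_ciSup (hbddA v hv t ht) 0)
    · exact ciSup_le fun x => (hterm v hv t ht x).2
  -- the key pointwise estimate
  have hpt : ∀ (v : EuclideanSpace ℝ (Fin l)), ‖v‖ = 1 →
      ∀ (v' : EuclideanSpace ℝ (Fin l)), ‖v'‖ = 1 →
      ∀ᶠ t in Filter.atTop, ∀ x,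
        |t * ‖v‖ / (n x (x + t • v) : ℝ) - t * ‖v'‖ / (n x (x + t • v') : ℝ)| ≤
          (C₁ / C₀ ^ 2) * ‖v - v'‖ := by
    intro v hv v' hv'
    rcases eq_or_ne v v' with rfl | hne
    · filter_upwards with t x
      simp
    · have hd : 0 < ‖v - v'‖ := by
        rw [norm_pos_iff]; exact sub_ne_zero_of_ne hne
      filter_upwards [Filter.eventually_ge_atTop (max T 1),
        Filter.eventually_ge_atTop (T / ‖v - v'‖)] with t ht hts x
      obtain ⟨htpos, hapos, halo, hahi⟩ := hn v hv t ht x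
      obtain ⟨_, hbpos, hblo, hbhi⟩ := hn v' hv' t ht x
      set a : ℝ := (n x (x + t • v) : ℝ) with haeq
      set b : ℝ := (n x (x + t • v') : ℝ) with hbeq
      have hsT : T ≤ t * ‖v - v'‖ := by
        rw [div_le_iff₀ hd] at hts; linarith
      -- the connecting segment
      have hw : ‖(‖v - v'‖⁻¹ : ℝ) • (v - v')‖ = 1 := by
        rw [norm_smul, norm_inv, norm_norm, inv_mul_cancel₀ hd.ne']
      have hw' : ‖(‖v - v'‖⁻¹ : ℝ) • (v' - v)‖ = 1 := by
        rw [norm_smul, norm_inv, norm_norm, norm_sub_rev v' v, inv_mul_cancel₀ hd.ne']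
      have hseg1 := (hT (t * ‖v - v'‖) hsT (x + t • v') ((‖v - v'‖⁻¹ : ℝ) • (v - v')) hw).2
      have hseg2 := (hT (t * ‖v - v'‖) hsT (x + t • v) ((‖v - v'‖⁻¹ : ℝ) • (v' - v)) hw').2
      have he1 : x + t • v' + (t * ‖v - v'‖) • ((‖v - v'‖⁻¹ : ℝ) • (v - v')) = x + t • v := by
        rw [smul_smul, mul_assoc, mul_inv_cancel₀ hd.ne', mul_one, smul_sub]
        abel
      have he2 : x + t • v + (t * ‖v - v'‖) • ((‖v - v'‖⁻¹ : ℝ) • (v' - v)) = x + t • v' := by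
        rw [smul_smul, mul_assoc, mul_inv_cancel₀ hd.ne', mul_one, smul_sub]
        abel
      rw [he1] at hseg1
      rw [he2] at hseg2
      have htr1 : a ≤ b + C₁ * (t * ‖v - v'‖) := by
        have := htri x (x + t • v') (x + t • v)
        have hcast : a ≤ b + (n (x + t • v') (x + t • v) : ℝ) := by
          rw [haeq, hbeq]; exact_mod_cast this
        linarith
      have htr2 : b ≤ a + C₁ * (t * ‖v - v'‖) := by
        have := htri x (x + t • v) (x + t • v')
        have hcast : b ≤ a + (n (x + t • v) (x + t • v') : ℝ) := by
          rw [haeq, hbeq]; exact_mod_cast this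
        linarith
      have habs : |b - a| ≤ C₁ * (t * ‖v - v'‖) := by
        rw [abs_sub_le_iff]; constructor <;> linarith
      rw [hv, hv', mul_one]
      rw [div_sub_div _ _ hapos.ne' hbpos.ne', abs_div, abs_of_pos (mul_pos hapos hbpos)]
      have hnum : |t * b - a * t| = t * |b - a| := by
        rw [show t * b - a * t = t * (b - a) by ring, abs_mul, abs_of_pos htpos]
      rw [hnum]
      have h1 : t * |b - a| ≤ t * (C₁ * (t * ‖v - v'‖)) :=
        mul_le_mul_of_nonneg_left habs htpos.le
      have h2 : C₀ * t * (C₀ * t) ≤ a * b :=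
        mul_le_mul halo hblo (by positivity) hapos.le
      calc t * |b - a| / (a * b) ≤ t * (C₁ * (t * ‖v - v'‖)) / (C₀ * t * (C₀ * t)) :=
            div_le_div₀ (by positivity) h1 (by positivity) h2
        _ = (C₁ / C₀ ^ 2) * ‖v - v'‖ := by
            have ht0 : t ≠ 0 := htpos.ne'
            field_simp
  -- the sup-level estimate
  have hsup : ∀ (v : EuclideanSpace ℝ (Fin l)), ‖v‖ = 1 →
      ∀ (v' : EuclideanSpace ℝ (Fin l)), ‖v'‖ = 1 →
      ∀ᶠ t in Filter.atTop,
        |(⨆ x, t * ‖v‖ / (n x (x + t • v) : ℝ)) - ⨆ x, t * ‖v'‖ / (n x (x + t • v') : ℝ)| ≤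
          (C₁ / C₀ ^ 2) * ‖v - v'‖ := by
    intro v hv v' hv'
    filter_upwards [hpt v hv v' hv', Filter.eventually_ge_atTop (max T 1)] with t hptt ht
    rw [abs_sub_le_iff]
    constructor
    · rw [sub_le_iff_le_add]
      refine ciSup_le fun x => ?_
      have := abs_sub_le_iff.mp (hptt x)
      have h2 : t * ‖v'‖ / (n x (x + t • v') : ℝ) ≤ ⨆ x, t * ‖v'‖ / (n x (x + t • v') : ℝ) :=
        le_ciSup (hbddA v' hv' t ht) x
      linarith [this.1]
    · rw [sub_le_iff_le_add]
      refine ciSup_le fun x => ?_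
      have := abs_sub_le_iff.mp (hptt x)
      have h2 : t * ‖v‖ / (n x (x + t • v) : ℝ) ≤ ⨆ x, t * ‖v‖ / (n x (x + t • v) : ℝ) :=
        le_ciSup (hbddA v hv t ht) x
      linarith [this.2]
  -- boundedness facts for the limsup
  have hBdd : ∀ (v : EuclideanSpace ℝ (Fin l)), ‖v‖ = 1 →
      Filter.IsBoundedUnder (· ≤ ·) Filter.atTop
        (fun t : ℝ => ⨆ x, t * ‖v‖ / (n x (x + t • v) : ℝ)) := by
    intro v hv
    refine ⟨1 / C₀, Filter.eventually_map.mpr ?_⟩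
    filter_upwards [Filter.eventually_ge_atTop (max T 1)] with t ht
    exact (hsupb v hv t ht).2
  have hCobdd : ∀ (v : EuclideanSpace ℝ (Fin l)), ‖v‖ = 1 →
      Filter.IsCoboundedUnder (· ≤ ·) Filter.atTop
        (fun t : ℝ => ⨆ x, t * ‖v‖ / (n x (x + t • v) : ℝ)) := by
    intro v hv
    refine Filter.isCoboundedUnder_le_of_eventually_le _ (x := 1 / C₁) ?_
    filter_upwards [Filter.eventually_ge_atTop (max T 1)] with t ht
    exact (hsupb v hv t ht).1
  -- positivity of d
  have hdpos : ∀ (v : EuclideanSpace ℝ (Fin l)), ‖v‖ = 1 → 1 / C₁ ≤ d v := by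
    intro v hv
    have hev : ∀ᶠ t in Filter.atTop,
        1 / C₁ ≤ ⨆ x, t * ‖v‖ / (n x (x + t • v) : ℝ) :=
      (Filter.eventually_ge_atTop (max T 1)).mono (fun t ht => (hsupb v hv t ht).1)
    exact Filter.le_limsup_of_frequently_le hev.frequently (hBdd v hv)
  -- the Lipschitz estimate for d
  have hlip : ∀ (v : EuclideanSpace ℝ (Fin l)), ‖v‖ = 1 →
      ∀ (v' : EuclideanSpace ℝ (Fin l)), ‖v'‖ = 1 →
      |d v - d v'| ≤ (C₁ / C₀ ^ 2) * ‖v - v'‖ := by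
    intro v hv v' hv'
    have key : ∀ (w : EuclideanSpace ℝ (Fin l)), ‖w‖ = 1 →
        ∀ (w' : EuclideanSpace ℝ (Fin l)), ‖w'‖ = 1 →
        d w - d w' ≤ (C₁ / C₀ ^ 2) * ‖w - w'‖ := by
      intro w hw w' hw'
      rw [sub_le_iff_le_add]
      have h1 : d w ≤ Filter.limsup
          (fun t : ℝ => (⨆ x, t * ‖w'‖ / (n x (x + t • w') : ℝ)) +
            (C₁ / C₀ ^ 2) * ‖w - w'‖) Filter.atTop := by
        refine Filter.limsup_le_limsup ?_ (hCobdd w hw) ?_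
        · filter_upwards [hsup w hw w' hw'] with t ht
          have := abs_sub_le_iff.mp ht
          linarith [this.1]
        · refine ⟨1 / C₀ + (C₁ / C₀ ^ 2) * ‖w - w'‖, Filter.eventually_map.mpr ?_⟩
          filter_upwards [Filter.eventually_ge_atTop (max T 1)] with t ht
          exact add_le_add_left (hsupb w' hw' t ht).2 _
      rw [limsup_add_const Filter.atTop
        (fun t : ℝ => ⨆ x, t * ‖w'‖ / (n x (x + t • w') : ℝ)) ((C₁ / C₀ ^ 2) * ‖w - w'‖)
        (hBdd w' hw') (hCobdd w' hw')] at h1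
      linarith
    rw [abs_sub_le_iff]
    refine ⟨key v hv v' hv', ?_⟩
    rw [norm_sub_rev]
    exact key v' hv' v hv
  have hsphere : ∀ v ∈ Metric.sphere (0 : EuclideanSpace ℝ (Fin l)) 1, ‖v‖ = 1 := by
    intro v hv
    rwa [mem_sphere_iff_norm, sub_zero] at hv
  refine ⟨?_, fun v hv => lt_of_lt_of_le (by positivity) (hdpos v (hsphere v hv)),
    fun v hv v' hv' => ⟨hpt v (hsphere v hv) v' (hsphere v' hv'),
      hlip v (hsphere v hv) v' (hsphere v' hv')⟩⟩
  -- continuity from the Lipschitz estimate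
  have : LipschitzOnWith (Real.toNNReal (C₁ / C₀ ^ 2)) d
      (Metric.sphere (0 : EuclideanSpace ℝ (Fin l)) 1) := by
    rw [lipschitzOnWith_iff_dist_le_mul]
    intro v hv v' hv'
    rw [Real.dist_eq, dist_eq_norm, Real.coe_toNNReal _ hKpos.le]
    exact hlip v (hsphere v hv) v' (hsphere v' hv')
  exact this.continuousOn
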